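/- Let d ∈ ℕ with d ≥ 1, b_1,...,b_d ∈ ℕ with b_i ≥ 2 for all i ∈ {1,...,d}, m ∈ ℕ, and define q(b_1,...,b_d,m) = ((∏_{i=1}^d b_i^{b_i})^{m+1} − (∏_{i=1}^d b_i)^{m+1}) / (∏_{i=1}^d b_i^{b_i} − ∏_{i=1}^d b_i). If T is a finite vector homogeneous tree with b_T = (b_1,...,b_d) and of height at least m+2, then the cardinality of the set Str_2(T, m+1) = {F ∈ Str_2(T) : ⊗F(1) ⊆ ⊗T(m+1)} is exactly q(b_1,...,b_d,m). -/

import Mathlib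

/- Common definitions: trees (as subsets of a partial order), levels, heights,
strong subtrees, homogeneous trees, vector trees, level selections, and the
Ramsey-type numbers `UDHL`, `Mil`, `LS` from the paper
"Dense subsets of products of finite trees". -/

namespace DHL

section Basic

variable {α : Type*} [PartialOrder α]

/-- The set of (strict) predecessors of `t` inside `T`. -/
def below (T : Set α) (t : α) : Set α := {s ∈ T | s < t}

/-- `T` is a tree: it is nonempty and for every `t ∈ T` the set of predecessors of `t`
in `T` is finite and linearly ordered by `<`. -/
def IsTree (T : Set α) : Prop :=
  T.Nonempty ∧ ∀ t ∈ T, (below T t).Finite ∧ IsChain (· < ·) (below T t)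

/-- The length of a node `t` in `T`. -/
noncomputable def len (T : Set α) (t : α) : ℕ := (below T t).ncard

/-- The `n`-th level of `T`. -/
def level (T : Set α) (n : ℕ) : Set α := {t ∈ T | len T t = n}

/-- `T` has (finite) height `h`. -/
def HasHeight (T : Set α) (h : ℕ) : Prop := ∀ n, (level T n).Nonempty ↔ n < h

/-- `T` has infinite height. -/
def InfHeight (T : Set α) : Prop := ∀ n, (level T n).Nonempty

/-- The set of immediate successors of `t` in `T`. -/
def immSuc (T : Set α) (t : α) : Set α :=
  {s ∈ T | t < s ∧ len T s = len T t + 1}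

/-- `T` is uniquely rooted. -/
def UniquelyRooted (T : Set α) : Prop := ∃ r, level T 0 = {r}

/-- `C` is a maximal chain of `T`. -/
def MaxChainIn (T C : Set α) : Prop :=
  C ⊆ T ∧ IsChain (· < ·) C ∧
    ∀ C' : Set α, C' ⊆ T → IsChain (· < ·) C' → C ⊆ C' → C = C'

/-- `T` is balanced: all maximal chains of `T` have the same cardinality. -/
def BalancedTree (T : Set α) : Prop :=
  ∀ C C' : Set α, MaxChainIn T C → MaxChainIn T C' → Cardinal.mk C = Cardinal.mk C'

/-- `S` is a strong subtree of `T`. -/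
def IsStrongSubtree (T S : Set α) : Prop :=
  S ⊆ T ∧ IsTree S ∧ UniquelyRooted S ∧ BalancedTree S ∧
  (∀ n, (level S n).Nonempty → ∃ m, level S n ⊆ level T m) ∧
  (∀ s ∈ S, (immSuc S s).Nonempty →
    ∀ t ∈ immSuc T s, ∃! s', s' ∈ immSuc S s ∧ t ≤ s')

/-- The level set `L_T(S)` of a strong subtree `S` of `T`. -/
def levelSetOf (T S : Set α) : Set ℕ :=
  {m | ∃ n, (level S n).Nonempty ∧ level S n ⊆ level T m}

/-- A homogeneous tree with branching number `b`: uniquely rooted, of infinite height,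
every node has exactly `b` immediate successors. -/
def IsHomTree (T : Set α) (b : ℕ) : Prop :=
  IsTree T ∧ UniquelyRooted T ∧ InfHeight T ∧ ∀ t ∈ T, (immSuc T t).ncard = b

/-- A finite homogeneous tree with branching number `b` and height `h`: uniquely rooted,
balanced, of height `h`, and every non-maximal node has exactly `b` immediate successors. -/
def IsFinHomTree (T : Set α) (b h : ℕ) : Prop :=
  IsTree T ∧ UniquelyRooted T ∧ BalancedTree T ∧ HasHeight T h ∧
  ∀ t ∈ T, (immSuc T t).Nonempty → (immSuc T t).ncard = b

/-- `Suc_T(t)`, the set of successors of `t` in `T`. -/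
def sucSet (T : Set α) (t : α) : Set α := {s ∈ T | t ≤ s}

/-- The density of a subset `F` of the `n`-th level of `T`. -/
noncomputable def dens (T : Set α) (n : ℕ) (F : Set α) : ℝ :=
  (F.ncard : ℝ) / ((level T n).ncard : ℝ)

/-- The density of a subset `F` of the `n`-th level of `W` relative to the node `w`. -/
noncomputable def relDens (W : Set α) (n : ℕ) (w : α) (F : Set α) : ℝ :=
  ((F ∩ sucSet W w).ncard : ℝ) / ((level W n ∩ sucSet W w).ncard : ℝ)

end Basic

section Vector

variable {ι : Type*} {X : ι → Type*} [∀ i, PartialOrder (X i)]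

/-- `⊗T(n) = T_1(n) × ⋯ × T_d(n)`. -/
def vLevel (T : ∀ i, Set (X i)) (n : ℕ) : Set (∀ i, X i) :=
  {t | ∀ i, t i ∈ level (T i) n}

/-- The level product `⊗T` of a vector tree. -/
def levelProd (T : ∀ i, Set (X i)) : Set (∀ i, X i) := ⋃ n, vLevel T n

/-- `S` is a vector strong subtree of `T`: each `S i` is a strong subtree of `T i`
and all level sets coincide. -/
def IsVStrongSubtree (T S : ∀ i, Set (X i)) : Prop :=
  (∀ i, IsStrongSubtree (T i) (S i)) ∧
  ∀ i j, levelSetOf (T i) (S i) = levelSetOf (T j) (S j)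

variable {β : Type*} [PartialOrder β]

/-- `D` is a level selection on the vector tree `T` (of height `h`) with values subsets of the
homogeneous tree `W`, with level set given by the (strictly increasing) map `l`. -/
def IsLevelSelection (T : ∀ i, Set (X i)) (h : ℕ) (W : Set β)
    (D : (∀ i, X i) → Set β) (l : ℕ → ℕ) : Prop :=
  StrictMonoOn l (Set.Iio h) ∧ ∀ n < h, ∀ t ∈ vLevel T n, D t ⊆ level W (l n)

/-- The level selection `D` (on the ambient vector tree `T` of height `h` with level map `l`)
is `(w, S, ε)`-dense, where `S` is a vector strong subtree of `T` given by its sets of nodes: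
for each point `s` of `⊗S` (sitting at level `m` of `T`) we have `ℓ_W(w) ≤ l m` and
`dens(D s | w) ≥ ε`. -/
def SelDense (W : Set β) (w : β) (ε : ℝ) (T : ∀ i, Set (X i)) (h : ℕ) (l : ℕ → ℕ)
    (D : (∀ i, X i) → Set β) (S : ∀ i, Set (X i)) : Prop :=
  ∀ m < h, ∀ s ∈ vLevel T m, (∀ i, s i ∈ S i) →
    len W w ≤ l m ∧ ε ≤ relDens W (l m) w (D s)

/-- `(w, S, ε)`-strong denseness: `(w', S, ε)`-denseness for every immediate successor `w'`
of `w` in `W`. -/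
def SelStronglyDense (W : Set β) (w : β) (ε : ℝ) (T : ∀ i, Set (X i)) (h : ℕ) (l : ℕ → ℕ)
    (D : (∀ i, X i) → Set β) (S : ∀ i, Set (X i)) : Prop :=
  ∀ w' ∈ immSuc W w, SelDense W w' ε T h l D S

end Vector

section Numbers

/-- The defining property of the number `UDHL(b | k, ε)`. -/
def UDHLholds (ι : Type) (b : ι → ℕ) (k : ℕ) (ε : ℝ) (N : ℕ) : Prop :=
  ∀ (X : ι → Type) [∀ i, PartialOrder (X i)] (T : ∀ i, Set (X i)),
    (∀ i, IsHomTree (T i) (b i)) →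
    ∀ L : Finset ℕ, N ≤ L.card →
      ∀ D : Set (∀ i, X i), D ⊆ levelProd T →
        (∀ n ∈ L, ε * ((vLevel T n).ncard : ℝ) ≤ ((D ∩ vLevel T n).ncard : ℝ)) →
        ∃ S : ∀ i, Set (X i), IsVStrongSubtree T S ∧ (∀ i, HasHeight (S i) k) ∧
          levelProd S ⊆ D

/-- The uniform density Halpern–Läuchli number `UDHL(b | k, ε)`. -/
noncomputable def UDHL (ι : Type) (b : ι → ℕ) (k : ℕ) (ε : ℝ) : ℕ :=
  sInf {N | UDHLholds ι b k ε N}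

/-- The defining property of the Milliken number `Mil(b | m, k, r)`. -/
def MilHolds (ι : Type) (b : ι → ℕ) (m k r : ℕ) (M : ℕ) : Prop :=
  ∀ (X : ι → Type) [∀ i, PartialOrder (X i)] (T : ∀ i, Set (X i)) (h : ℕ),
    (∀ i, IsFinHomTree (T i) (b i) h) → M ≤ h →
    ∀ c : (∀ i, Set (X i)) → Fin r,
      ∃ S : ∀ i, Set (X i), IsVStrongSubtree T S ∧ (∀ i, HasHeight (S i) m) ∧
        ∀ R R' : ∀ i, Set (X i),
          IsVStrongSubtree S R → (∀ i, HasHeight (R i) k) →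
          IsVStrongSubtree S R' → (∀ i, HasHeight (R' i) k) → c R = c R'

/-- The Milliken number `Mil(b | m, k, r)`. -/
noncomputable def Mil (ι : Type) (b : ι → ℕ) (m k r : ℕ) : ℕ :=
  sInf {M | MilHolds ι b m k r M}

/-- The defining property of the level-selection number `LS(b, bW | k, ε)`. -/
def LSholds (ι : Type) (b : ι → ℕ) (bW k : ℕ) (ε : ℝ) (N : ℕ) : Prop :=
  ∀ (X : ι → Type) [∀ i, PartialOrder (X i)] (β : Type) [PartialOrder β]
    (T : ∀ i, Set (X i)) (h : ℕ) (W : Set β) (D : (∀ i, X i) → Set β) (l : ℕ → ℕ),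
    (∀ i, IsFinHomTree (T i) (b i) h) → IsHomTree W bW →
    IsLevelSelection T h W D l → N ≤ h →
    (∀ n < h, ∀ t ∈ vLevel T n, ε * ((level W (l n)).ncard : ℝ) ≤ ((D t).ncard : ℝ)) →
    ∃ (S : ∀ i, Set (X i)) (R : Set β),
      IsVStrongSubtree T S ∧ (∀ i, HasHeight (S i) k) ∧
      IsStrongSubtree W R ∧ HasHeight R k ∧
      ∀ n < k, ∀ w ∈ level R n, ∀ s ∈ vLevel S n, w ∈ D s

/-- The level-selection number `LS(b, bW | k, ε)`. -/
noncomputable def LS (ι : Type) (b : ι → ℕ) (bW k : ℕ) (ε : ℝ) : ℕ :=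
  sInf {N | LSholds ι b bW k ε N}

end Numbers

section Seq

/-- The type of finite sequences of naturals, carrying the (end-extension) prefix order;
the ambient type of the trees `b^{<ℕ}`. -/
def SeqT : Type := List ℕ

/-- The underlying list of an element of `SeqT`. -/
def toL (s : SeqT) : List ℕ := s

instance : PartialOrder SeqT where
  le s t := toL s <+: toL t
  le_refl s := List.prefix_refl _
  le_trans a b c hab hbc := List.IsPrefix.trans hab hbc
  le_antisymm a b h1 h2 :=
    List.Sublist.eq_of_length (List.IsPrefix.sublist h1)
      (Nat.le_antisymm (List.IsPrefix.length_le h1) (List.IsPrefix.length_le h2))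

/-- The tree `b^{<ℕ}` of all finite sequences with values in `{0, …, b-1}`. -/
def fullSeq (b : ℕ) : Set SeqT := {l | ∀ x ∈ toL l, x < b}

end Seq

end DHL

section Aux

open DHL Set

variable {α : Type*} [PartialOrder α] {T : Set α}

lemma below_subset_below {s t : α} (h : s < t) : below T s ⊆ below T t :=
  fun x hx => ⟨hx.1, lt_trans hx.2 h⟩

lemma len_lt_len (hT : IsTree T) {s t : α} (hs : s ∈ T) (ht : t ∈ T)
    (h : s < t) : len T s < len T t := by
  refine Set.ncard_lt_ncard ?_ (hT.2 t ht).1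
  rw [Set.ssubset_def]
  exact ⟨below_subset_below h, fun hsub => lt_irrefl s (hsub ⟨hs, h⟩).2⟩

lemma mem_level_self {t : α} (ht : t ∈ T) : t ∈ level T (len T t) := ⟨ht, rfl⟩

lemma len_lt_height {h : ℕ} (hh : HasHeight T h) {t : α} (ht : t ∈ T) : len T t < h :=
  (hh _).1 ⟨t, mem_level_self ht⟩

lemma level_eq_of_mem {t : α} {k k' : ℕ} (h1 : t ∈ level T k) (h2 : t ∈ level T k') :
    k = k' := h1.2.symm.trans h2.2

/-- The full chain below and including `t`. -/
def fullChain (T : Set α) (t : α) : Set α := {x ∈ T | x ≤ t}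

lemma mem_fullChain_self {t : α} (ht : t ∈ T) : t ∈ fullChain T t := ⟨ht, le_rfl⟩

lemma fullChain_eq {t : α} (ht : t ∈ T) : fullChain T t = insert t (below T t) := by
  ext x
  simp only [fullChain, below, Set.mem_setOf_eq, Set.mem_insert_iff]
  constructor
  · rintro ⟨hxT, hle⟩
    rcases eq_or_lt_of_le hle with rfl | hlt
    · exact Or.inl rfl
    · exact Or.inr ⟨hxT, hlt⟩
  · rintro (rfl | ⟨hxT, hlt⟩)
    · exact ⟨ht, le_rfl⟩
    · exact ⟨hxT, le_of_lt hlt⟩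

lemma fullChain_isChain (hT : IsTree T) {t : α} (ht : t ∈ T) :
    IsChain (· < ·) (fullChain T t) := by
  rw [fullChain_eq ht]
  intro x hx y hy hxy
  rcases hx with rfl | hx
  · rcases hy with rfl | hy
    · exact absurd rfl hxy
    · exact Or.inr hy.2
  · rcases hy with rfl | hy
    · exact Or.inl hx.2
    · exact (hT.2 t ht).2 hx hy hxy

lemma fullChain_subset {t : α} : fullChain T t ⊆ T := fun _ hx => hx.1

lemma fullChain_finite (hT : IsTree T) {t : α} (ht : t ∈ T) : (fullChain T t).Finite := by
  rw [fullChain_eq ht]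
  exact ((hT.2 t ht).1).insert t

lemma fullChain_ncard (hT : IsTree T) {t : α} (ht : t ∈ T) :
    (fullChain T t).ncard = len T t + 1 := by
  rw [fullChain_eq ht, Set.ncard_insert_of_notMem (fun h => lt_irrefl t h.2) (hT.2 t ht).1]
  rfl

lemma le_of_len_le (hT : IsTree T) {t x y : α} (ht : t ∈ T)
    (hx : x ∈ fullChain T t) (hy : y ∈ fullChain T t) (hlen : len T x ≤ len T y) : x ≤ y := by
  rcases eq_or_ne x y with rfl | hne
  · exact le_rfl
  rcases fullChain_isChain hT ht hx hy hne with h | h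
  · exact le_of_lt h
  · exact absurd (len_lt_len hT (fullChain_subset hy) (fullChain_subset hx) h)
      (not_lt.2 hlen)

lemma eq_of_len_eq (hT : IsTree T) {t x y : α} (ht : t ∈ T)
    (hx : x ∈ fullChain T t) (hy : y ∈ fullChain T t) (hlen : len T x = len T y) : x = y :=
  le_antisymm (le_of_len_le hT ht hx hy hlen.le) (le_of_len_le hT ht hy hx hlen.ge)

lemma exists_parent (hT : IsTree T) {t : α} (ht : t ∈ T) {n : ℕ} (hn : len T t = n + 1) :
    ∃ p ∈ below T t, len T p = n ∧ ∀ y ∈ below T t, y ≤ p := by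
  have hfin := (hT.2 t ht).1
  have hch := (hT.2 t ht).2
  have hne : (below T t).Nonempty := by
    apply Set.nonempty_of_ncard_ne_zero
    rw [len] at hn
    omega
  obtain ⟨p, hp, hmax⟩ := Set.Finite.exists_maximalFor id _ hfin hne
  have htop : ∀ y ∈ below T t, y ≤ p := by
    intro y hy
    rcases eq_or_ne y p with rfl | hne'
    · exact le_rfl
    rcases hch hy hp hne' with h | h
    · exact le_of_lt h
    · exact absurd (le_antisymm (le_of_lt h) (hmax hy (le_of_lt h))) (ne_of_lt h)
  refine ⟨p, hp, ?_, htop⟩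
  have hbp : below T p = below T t \ {p} := by
    ext y
    constructor
    · rintro ⟨hyT, hyp⟩
      exact ⟨⟨hyT, lt_trans hyp hp.2⟩, fun hy => lt_irrefl p (hy ▸ hyp)⟩
    · rintro ⟨hy, hne'⟩
      exact ⟨hy.1, lt_of_le_of_ne (htop y hy) (by simpa using hne')⟩
  have : len T p = (below T t).ncard - 1 := by
    rw [len, hbp, Set.ncard_diff_singleton_of_mem hp]
  rw [this, ← len, hn]
  omega

lemma exists_len_eq (hT : IsTree T) {t : α} (ht : t ∈ T) :
    ∀ k ≤ len T t, ∃ u ∈ T, u ≤ t ∧ len T u = k := by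
  set n := len T t with hn
  clear_value n
  induction n generalizing t with
  | zero => intro k hk; interval_cases k; exact ⟨t, ht, le_rfl, hn.symm⟩
  | succ n ih =>
    intro k hk
    rcases eq_or_lt_of_le hk with rfl | hk'
    · exact ⟨t, ht, le_rfl, hn.symm⟩
    · obtain ⟨p, hp, hlenp, -⟩ := exists_parent hT ht hn.symm
      obtain ⟨u, huT, hup, hulen⟩ := ih hp.1 hlenp.symm k (by omega)
      exact ⟨u, huT, le_trans hup (le_of_lt hp.2), hulen⟩

lemma chain_bounded (hT : IsTree T) {h : ℕ} (hh : HasHeight T h) {C : Set α}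
    (hC : C ⊆ T) (hch : IsChain (· < ·) C) : C.Finite ∧ C.ncard ≤ h := by
  have hinj : Set.InjOn (len T) C := by
    intro x hx y hy hxy
    rcases eq_or_ne x y with rfl | hne
    · rfl
    rcases hch hx hy hne with h' | h'
    · exact absurd hxy (ne_of_lt (len_lt_len hT (hC hx) (hC hy) h'))
    · exact absurd hxy.symm (ne_of_lt (len_lt_len hT (hC hy) (hC hx) h'))
  have himg : len T '' C ⊆ Set.Iio h := by
    rintro - ⟨x, hx, rfl⟩
    exact len_lt_height hh (hC hx)
  have hfinimg : (len T '' C).Finite := (Set.finite_Iio h).subset himg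
  have hfin : C.Finite := Set.Finite.of_finite_image hfinimg hinj
  refine ⟨hfin, ?_⟩
  calc C.ncard = (len T '' C).ncard := (Set.ncard_image_of_injOn hinj).symm
    _ ≤ (Set.Iio h).ncard := Set.ncard_le_ncard himg (Set.finite_Iio h)
    _ = h := by rw [show Set.Iio h = ↑(Finset.range h) from (Finset.coe_range h).symm,
                  Set.ncard_coe_finset, Finset.card_range]

lemma immSuc_of_gt (hT : IsTree T) {t s : α} (ht : t ∈ T) (hs : s ∈ T) (hts : t < s) :
    ∃ u ∈ immSuc T t, u ≤ s := by
  have hlen : len T t < len T s := len_lt_len hT ht hs hts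
  obtain ⟨u, huT, hus, hulen⟩ := exists_len_eq hT hs (len T t + 1) (by omega)
  have htc : t ∈ fullChain T s := ⟨ht, le_of_lt hts⟩
  have huc : u ∈ fullChain T s := ⟨huT, hus⟩
  have htu : t ≤ u := le_of_len_le hT hs htc huc (by omega)
  have : t < u := lt_of_le_of_ne htu (fun h => by rw [h] at hulen; omega)
  exact ⟨u, ⟨huT, this, hulen⟩, hus⟩

lemma immSuc_nonempty {b h : ℕ} (hT : IsFinHomTree T b h) {t : α} (ht : t ∈ T)
    (hlt : len T t + 1 < h) : (immSuc T t).Nonempty := by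
  by_contra hemp
  rw [Set.not_nonempty_iff_eq_empty] at hemp
  have htree := hT.1
  -- no strict successor of t
  have hnos : ∀ s ∈ T, ¬ t < s := by
    intro s hs hts
    obtain ⟨u, hu, -⟩ := immSuc_of_gt htree ht hs hts
    rw [hemp] at hu
    exact hu
  -- fullChain T t is a maximal chain
  have hmax : MaxChainIn T (fullChain T t) := by
    refine ⟨fullChain_subset, fullChain_isChain htree ht, ?_⟩
    intro C' hC'T hC'ch hsub
    refine le_antisymm hsub ?_
    intro v hv
    rcases eq_or_ne v t with rfl | hne
    · exact mem_fullChain_self ht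
    rcases hC'ch hv (hsub (mem_fullChain_self ht)) hne with h' | h'
    · exact ⟨hC'T hv, le_of_lt h'⟩
    · exact absurd h' (hnos v (hC'T hv))
  -- a maximal chain of length h
  have hh2 : 1 ≤ h := by omega
  obtain ⟨w, hw⟩ := (hT.2.2.2.1 (h - 1)).2 (by omega)
  have hmaxw : MaxChainIn T (fullChain T w) := by
    refine ⟨fullChain_subset, fullChain_isChain htree hw.1, ?_⟩
    intro C' hC'T hC'ch hsub
    have hcb := chain_bounded htree hT.2.2.2.1 hC'T hC'ch
    refine (Set.eq_of_subset_of_ncard_le hsub ?_ hcb.1)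
    rw [fullChain_ncard htree hw.1, hw.2]
    omega
  have hbal := hT.2.2.1 _ _ hmax hmaxw
  have hnat : (fullChain T t).ncard = (fullChain T w).ncard := by
    have h2 : Nat.card ↑(fullChain T t) = Nat.card ↑(fullChain T w) :=
      congrArg Cardinal.toNat hbal
    rwa [Nat.card_coe_set_eq, Nat.card_coe_set_eq] at h2
  rw [fullChain_ncard htree ht, fullChain_ncard htree hw.1, hw.2] at hnat
  omega

lemma immSuc_card {b h : ℕ} (hT : IsFinHomTree T b h) (hb : 1 ≤ b) {t : α} (ht : t ∈ T)
    (hlt : len T t + 1 < h) : (immSuc T t).Finite ∧ (immSuc T t).ncard = b := by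
  have hcard := hT.2.2.2.2 t ht (immSuc_nonempty hT ht hlt)
  exact ⟨Set.finite_of_ncard_ne_zero (by omega), hcard⟩

/-- Cardinality of a disjoint union over a finite index set, constant fibers. -/
lemma ncard_biUnion_sum {γ : Type*} {s : Finset ℕ} (f : ℕ → Set γ)
    (hfin : ∀ a ∈ s, (f a).Finite)
    (hdisj : ∀ a ∈ s, ∀ a' ∈ s, a ≠ a' → Disjoint (f a) (f a')) :
    (⋃ a ∈ (s : Set ℕ), f a).Finite ∧
      (⋃ a ∈ (s : Set ℕ), f a).ncard = ∑ a ∈ s, (f a).ncard := by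
  classical
  induction s using Finset.induction_on with
  | empty => simp
  | @insert a s ha ih =>
    have hfin' : ∀ a' ∈ s, (f a').Finite := fun a' h => hfin a' (Finset.mem_insert_of_mem h)
    have hdisj' : ∀ x ∈ s, ∀ y ∈ s, x ≠ y → Disjoint (f x) (f y) := fun x hx y hy =>
      hdisj x (Finset.mem_insert_of_mem hx) y (Finset.mem_insert_of_mem hy)
    obtain ⟨hF, hC⟩ := ih hfin' hdisj'
    have hsplit : (⋃ x ∈ ((insert a s : Finset ℕ) : Set ℕ), f x) =
        f a ∪ ⋃ x ∈ (s : Set ℕ), f x := by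
      simp [Set.biUnion_insert]
    have hfa : (f a).Finite := hfin a (Finset.mem_insert_self a s)
    have hdaj : Disjoint (f a) (⋃ x ∈ (s : Set ℕ), f x) := by
      rw [Set.disjoint_iff_inter_eq_empty]
      ext y
      simp only [Set.mem_inter_iff, Set.mem_iUnion, Set.mem_empty_iff_false, iff_false,
        not_and, not_exists]
      intro hya x hx hyx
      exact (hdisj a (Finset.mem_insert_self a s) x (Finset.mem_insert_of_mem hx)
        (fun h => ha (h ▸ hx))).ne_of_mem hya hyx rfl
    constructor
    · rw [hsplit]; exact hfa.union hF
    · rw [hsplit, Set.ncard_union_eq hdaj hfa hF, hC, Finset.sum_insert ha]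

/-- Cardinality of a disjoint union over a finite set, constant fiber size. -/
lemma ncard_biUnion_const {β γ : Type*} {s : Set β} (hs : s.Finite) (f : β → Set γ) (k : ℕ)
    (hfin : ∀ a ∈ s, (f a).Finite) (hcard : ∀ a ∈ s, (f a).ncard = k)
    (hdisj : ∀ a ∈ s, ∀ a' ∈ s, a ≠ a' → Disjoint (f a) (f a')) :
    (⋃ a ∈ s, f a).Finite ∧ (⋃ a ∈ s, f a).ncard = s.ncard * k := by
  classical
  refine Set.Finite.induction_on (motive := fun s _ => (∀ a ∈ s, (f a).Finite) →
      (∀ a ∈ s, (f a).ncard = k) →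
      (∀ a ∈ s, ∀ a' ∈ s, a ≠ a' → Disjoint (f a) (f a')) →
      ((⋃ a ∈ s, f a).Finite ∧ (⋃ a ∈ s, f a).ncard = s.ncard * k))
    s hs ?_ ?_ hfin hcard hdisj
  · simp
  · intro a s ha hsf ih hfin hcard hdisj
    have hfin' : ∀ a' ∈ s, (f a').Finite := fun a' h => hfin a' (Set.mem_insert_of_mem _ h)
    have hcard' : ∀ a' ∈ s, (f a').ncard = k := fun a' h => hcard a' (Set.mem_insert_of_mem _ h)
    have hdisj' : ∀ x ∈ s, ∀ y ∈ s, x ≠ y → Disjoint (f x) (f y) := fun x hx y hy =>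
      hdisj x (Set.mem_insert_of_mem _ hx) y (Set.mem_insert_of_mem _ hy)
    obtain ⟨hF, hC⟩ := ih hfin' hcard' hdisj'
    have hsplit : (⋃ x ∈ insert a s, f x) = f a ∪ ⋃ x ∈ s, f x := by
      simp [Set.biUnion_insert]
    have hfa : (f a).Finite := hfin a (Set.mem_insert _ _)
    have hdaj : Disjoint (f a) (⋃ x ∈ s, f x) := by
      rw [Set.disjoint_iff_inter_eq_empty]
      ext y
      simp only [Set.mem_inter_iff, Set.mem_iUnion, Set.mem_empty_iff_false, iff_false,
        not_and, not_exists]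
      intro hya x hx hyx
      exact (hdisj a (Set.mem_insert _ _) x (Set.mem_insert_of_mem _ hx)
        (fun h => ha (h ▸ hx))).ne_of_mem hya hyx rfl
    constructor
    · rw [hsplit]; exact hfa.union hF
    · rw [hsplit, Set.ncard_union_eq hdaj hfa hF, hC,
        Set.ncard_insert_of_notMem ha hsf, hcard a (Set.mem_insert _ _)]
      ring

/-- The set of nodes at level `k` of `T` lying above `t`. -/
def aboveAt (T : Set α) (t : α) (k : ℕ) : Set α := {s ∈ level T k | t ≤ s}

lemma aboveAt_card {b h : ℕ} (hT : IsFinHomTree T b h) (hb : 1 ≤ b) {t : α} (ht : t ∈ T)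
    {n : ℕ} (hn : len T t = n) :
    ∀ k, n + k < h → (aboveAt T t (n + k)).Finite ∧ (aboveAt T t (n + k)).ncard = b ^ k := by
  intro k
  induction k with
  | zero =>
    intro hlt
    have : aboveAt T t (n + 0) = {t} := by
      ext s
      simp only [aboveAt, level, Set.mem_setOf_eq, Set.mem_singleton_iff]
      constructor
      · rintro ⟨⟨hsT, hslen⟩, hts⟩
        rcases eq_or_lt_of_le hts with rfl | hlt'
        · rfl
        · exact absurd (len_lt_len hT.1 ht hsT hlt') (by omega)
      · rintro rfl
        exact ⟨⟨ht, by omega⟩, le_rfl⟩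
    rw [this]
    simp
  | succ k ih =>
    intro hlt
    obtain ⟨hAfin, hAcard⟩ := ih (by omega)
    set A := aboveAt T t (n + k) with hA
    have hsplit : aboveAt T t (n + (k + 1)) = ⋃ u ∈ A, immSuc T u := by
      ext s
      simp only [Set.mem_iUnion, exists_prop]
      constructor
      · rintro ⟨⟨hsT, hslen⟩, hts⟩
        obtain ⟨p, hp, hplen, hptop⟩ := exists_parent hT.1 hsT (n := n + k) (by omega)
        have htp : t ≤ p := by
          rcases eq_or_lt_of_le hts with rfl | hlt'
          · exact absurd hslen (by omega)
          · exact hptop t ⟨ht, hlt'⟩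
        exact ⟨p, ⟨⟨hp.1, by omega⟩, htp⟩, ⟨hsT, hp.2, by omega⟩⟩
      · rintro ⟨u, ⟨⟨huT, hulen⟩, htu⟩, hsT, hus, hslen⟩
        exact ⟨⟨hsT, by omega⟩, le_trans htu (le_of_lt hus)⟩
    have hufacts : ∀ u ∈ A, u ∈ T ∧ len T u = n + k := fun u hu => ⟨hu.1.1, hu.1.2⟩
    have hdisj : ∀ u ∈ A, ∀ u' ∈ A, u ≠ u' → Disjoint (immSuc T u) (immSuc T u') := by
      intro u hu u' hu' hne
      rw [Set.disjoint_left]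
      rintro s ⟨hsT, hus, hslen⟩ ⟨_, hu's, hslen'⟩
      have h1 : u ∈ fullChain T s := ⟨(hufacts u hu).1, le_of_lt hus⟩
      have h2 : u' ∈ fullChain T s := ⟨(hufacts u' hu').1, le_of_lt hu's⟩
      exact hne (eq_of_len_eq hT.1 hsT h1 h2 (by rw [(hufacts u hu).2, (hufacts u' hu').2]))
    have himm : ∀ u ∈ A, (immSuc T u).Finite ∧ (immSuc T u).ncard = b := by
      intro u hu
      exact immSuc_card hT hb (hufacts u hu).1 (by rw [(hufacts u hu).2]; omega)
    obtain ⟨hFin, hCard⟩ := ncard_biUnion_const hAfin (immSuc T) b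
      (fun u hu => (himm u hu).1) (fun u hu => (himm u hu).2) hdisj
    rw [hsplit]
    exact ⟨hFin, by rw [hCard, hAcard, pow_succ]⟩

lemma root_mem {r : α} (hroot : level T 0 = {r}) : r ∈ T ∧ len T r = 0 := by
  have : r ∈ level T 0 := by rw [hroot]; rfl
  exact ⟨this.1, this.2⟩

lemma root_le (hT : IsTree T) {r : α} (hroot : level T 0 = {r}) {s : α} (hs : s ∈ T) :
    r ≤ s := by
  obtain ⟨u, huT, hus, hulen⟩ := exists_len_eq hT hs 0 (Nat.zero_le _)
  have : u ∈ level T 0 := ⟨huT, hulen⟩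
  rw [hroot] at this
  rwa [← this]

lemma level_card {b h : ℕ} (hT : IsFinHomTree T b h) (hb : 1 ≤ b) {k : ℕ} (hk : k < h) :
    (level T k).Finite ∧ (level T k).ncard = b ^ k := by
  obtain ⟨r, hroot⟩ := hT.2.1
  have hr := root_mem hroot
  have : level T k = aboveAt T r (0 + k) := by
    ext s
    simp only [aboveAt, level, Set.mem_setOf_eq, Nat.zero_add]
    exact ⟨fun hs => ⟨hs, root_le hT.1 hroot hs.1⟩, fun hs => hs.1⟩
  rw [this]
  exact aboveAt_card hT hb hr.1 hr.2 k (by omega)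

lemma tree_height2_struct {S : Set α} (hS : IsTree S) (hH : HasHeight S 2) {r : α}
    (hroot : level S 0 = {r}) :
    level S 1 = immSuc S r ∧ S = {r} ∪ level S 1 := by
  have hr := root_mem hroot
  have hlen2 : ∀ y ∈ S, len S y < 2 := fun y hy => len_lt_height hH hy
  constructor
  · ext y
    constructor
    · rintro ⟨hyS, hylen⟩
      obtain ⟨p, hp, hplen, -⟩ := exists_parent hS hyS (n := 0) hylen
      have : p ∈ level S 0 := ⟨hp.1, hplen⟩
      rw [hroot] at this
      exact ⟨hyS, this ▸ hp.2, by rw [hr.2]; omega⟩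
    · rintro ⟨hyS, hry, hylen⟩
      exact ⟨hyS, by rw [hylen, hr.2]⟩
  · ext y
    constructor
    · intro hy
      have := hlen2 y hy
      interval_cases hl : len S y
      · exact Or.inl (by have : y ∈ level S 0 := ⟨hy, hl⟩; rwa [hroot] at this)
      · exact Or.inr ⟨hy, hl⟩
    · rintro (rfl | hy)
      · exact hr.1
      · exact hy.1

/-- Height-2 strong subtrees of `T`, rooted at `r`, with top level inside `level T (m+1)`. -/
def Ar (T : Set α) (m : ℕ) (r : α) : Set (Set α) :=
  {S | IsStrongSubtree T S ∧ HasHeight S 2 ∧ level S 0 = {r} ∧ level S 1 ⊆ level T (m + 1)}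

/-- Height-2 strong subtrees of `T` with root at level `n`, top level inside `level T (m+1)`. -/
def An (T : Set α) (m n : ℕ) : Set (Set α) :=
  {S | IsStrongSubtree T S ∧ HasHeight S 2 ∧ level S 0 ⊆ level T n ∧
    level S 1 ⊆ level T (m + 1)}

section ArCard

variable {b h m n : ℕ} {r : α}

/-- The parametrizing map for `Ar`. -/
def Phi (r : α) {I : Type*} (g : I → α) : Set α := insert r (Set.range g)

lemma mem_Ar (hT : IsFinHomTree T b h) (hb : 2 ≤ b) (hm : m + 2 ≤ h)
    (hr : r ∈ level T n) (hn : n ≤ m)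
    (g : ↑(immSuc T r) → α)
    (hg : ∀ t : ↑(immSuc T r), g t ∈ aboveAt T t.1 (m + 1)) :
    Phi r g ∈ Ar T m r := by
  obtain ⟨hrT, hrlen⟩ := hr
  have htree := hT.1
  have hImm : ∀ t : ↑(immSuc T r), t.1 ∈ T ∧ r < t.1 ∧ len T t.1 = n + 1 := by
    intro t; obtain ⟨h1, h2, h3⟩ := t.2; exact ⟨h1, h2, by rw [h3, hrlen]⟩
  have hgmem : ∀ t : ↑(immSuc T r), g t ∈ T ∧ len T (g t) = m + 1 ∧ t.1 ≤ g t := by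
    intro t; obtain ⟨⟨h1, h2⟩, h3⟩ := hg t; exact ⟨h1, h2, h3⟩
  have hgt : ∀ t : ↑(immSuc T r), r < g t :=
    fun t => lt_of_lt_of_le (hImm t).2.1 (hgmem t).2.2
  have hgr : ∀ t : ↑(immSuc T r), g t ≠ r := by
    intro t heq
    have := (hgmem t).2.1
    rw [heq, hrlen] at this; omega
  set S := Phi r g with hSdef
  have hsub : S ⊆ T := by
    rintro y (rfl | ⟨t, rfl⟩)
    · exact hrT
    · exact (hgmem t).1
  have hrS : r ∈ S := Set.mem_insert _ _
  have hgS : ∀ t : ↑(immSuc T r), g t ∈ S := fun t => Set.mem_insert_of_mem _ ⟨t, rfl⟩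
  have hbr : below S r = ∅ := by
    ext y
    simp only [below, Set.mem_setOf_eq, Set.mem_empty_iff_false, iff_false, not_and]
    rintro (rfl | ⟨t, rfl⟩) hlt
    · exact lt_irrefl _ hlt
    · have := len_lt_len htree ((hgmem t).1) hrT hlt
      rw [(hgmem t).2.1, hrlen] at this; omega
  have hlenr : len S r = 0 := by rw [len, hbr, Set.ncard_empty]
  have hbg : ∀ t : ↑(immSuc T r), below S (g t) = {r} := by
    intro t
    ext y
    simp only [below, Set.mem_setOf_eq, Set.mem_singleton_iff]
    constructor
    · rintro ⟨rfl | ⟨t', rfl⟩, hlt⟩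
      · rfl
      · have := len_lt_len htree ((hgmem t').1) ((hgmem t).1) hlt
        rw [(hgmem t).2.1, (hgmem t').2.1] at this; omega
    · rintro rfl
      exact ⟨hrS, hgt t⟩
  have hleng : ∀ t : ↑(immSuc T r), len S (g t) = 1 := by
    intro t; rw [len, hbg t, Set.ncard_singleton]
  have hcases : ∀ y ∈ S, y = r ∨ ∃ t, y = g t := by
    rintro y (rfl | ⟨t, rfl⟩)
    · exact Or.inl rfl
    · exact Or.inr ⟨t, rfl⟩
  have hlevel0 : level S 0 = {r} := by
    ext y
    simp only [level, Set.mem_setOf_eq, Set.mem_singleton_iff]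
    constructor
    · rintro ⟨hy, hl⟩
      rcases hcases y hy with rfl | ⟨t, rfl⟩
      · rfl
      · rw [hleng t] at hl; omega
    · rintro rfl; exact ⟨hrS, hlenr⟩
  have hlevel1 : level S 1 = Set.range g := by
    ext y
    simp only [level, Set.mem_setOf_eq, Set.mem_range]
    constructor
    · rintro ⟨hy, hl⟩
      rcases hcases y hy with rfl | ⟨t, rfl⟩
      · rw [hlenr] at hl; omega
      · exact ⟨t, rfl⟩
    · rintro ⟨t, rfl⟩; exact ⟨hgS t, hleng t⟩
  have hlevelhi : ∀ k, 2 ≤ k → level S k = ∅ := by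
    intro k hk
    ext y
    simp only [level, Set.mem_setOf_eq, Set.mem_empty_iff_false, iff_false, not_and]
    intro hy hl
    rcases hcases y hy with rfl | ⟨t, rfl⟩
    · rw [hlenr] at hl; omega
    · rw [hleng t] at hl; omega
  have hIne : Nonempty ↑(immSuc T r) := by
    have : (immSuc T r).Nonempty := immSuc_nonempty hT hrT (by omega)
    exact this.to_subtype
  obtain ⟨t₀⟩ := hIne
  have hStree : IsTree S := by
    refine ⟨⟨r, hrS⟩, fun y hy => ?_⟩
    have hsb : below S y ⊆ below T y := fun x ⟨hx1, hx2⟩ => ⟨hsub hx1, hx2⟩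
    exact ⟨((htree.2 y (hsub hy)).1).subset hsb, ((htree.2 y (hsub hy)).2).mono hsb⟩
  have hUR : UniquelyRooted S := ⟨r, hlevel0⟩
  have hH : HasHeight S 2 := by
    intro k
    constructor
    · rintro ⟨y, hy⟩
      by_contra hk
      rw [hlevelhi k (by omega)] at hy
      exact hy
    · intro hk
      interval_cases k
      · exact ⟨r, by rw [hlevel0]; rfl⟩
      · exact ⟨g t₀, by rw [hlevel1]; exact ⟨t₀, rfl⟩⟩
  have hpairchain : ∀ t : ↑(immSuc T r), IsChain (· < ·) ({r, g t} : Set α) := by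
    intro t x hx y hy hne
    rcases hx with rfl | rfl <;> rcases hy with rfl | rfl
    · exact absurd rfl hne
    · exact Or.inl (hgt t)
    · exact Or.inr (hgt t)
    · exact absurd rfl hne
  have hpairsub : ∀ t : ↑(immSuc T r), ({r, g t} : Set α) ⊆ S := by
    rintro t y (rfl | rfl)
    · exact hrS
    · exact hgS t
  have hmaxpair : ∀ C, MaxChainIn S C → ∃ t : ↑(immSuc T r), C = {r, g t} := by
    rintro C ⟨hCS, hCch, hCmax⟩
    by_cases hg0 : ∃ t : ↑(immSuc T r), g t ∈ C
    · obtain ⟨t, hgtC⟩ := hg0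
      refine ⟨t, hCmax _ (hpairsub t) (hpairchain t) ?_⟩
      intro y hy
      rcases hcases y (hCS hy) with rfl | ⟨t', rfl⟩
      · exact Set.mem_insert _ _
      · rcases eq_or_ne (g t') (g t) with heq | hne
        · rw [heq]; exact Set.mem_insert_of_mem _ rfl
        · rcases hCch hy hgtC hne with hlt | hlt
          · have := len_lt_len htree (hsub (hCS hy)) ((hgmem t).1) hlt
            rw [(hgmem t).2.1, (hgmem t').2.1] at this; omega
          · have := len_lt_len htree ((hgmem t).1) (hsub (hCS hy)) hlt
            rw [(hgmem t).2.1, (hgmem t').2.1] at this; omega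
    · exfalso
      push_neg at hg0
      have hCr : C ⊆ {r, g t₀} := by
        intro y hy
        rcases hcases y (hCS hy) with rfl | ⟨t', rfl⟩
        · exact Set.mem_insert _ _
        · exact absurd hy (hg0 t')
      have := hCmax _ (hpairsub t₀) (hpairchain t₀) hCr
      exact hg0 t₀ (this ▸ (Set.mem_insert_of_mem _ rfl : g t₀ ∈ ({r, g t₀} : Set α)))
  have hBal : BalancedTree S := by
    intro C C' hC hC'
    obtain ⟨t1, rfl⟩ := hmaxpair C hC
    obtain ⟨t2, rfl⟩ := hmaxpair C' hC'
    rw [show ({r, g t1} : Set α) = insert r {g t1} from rfl,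
      show ({r, g t2} : Set α) = insert r {g t2} from rfl,
      Cardinal.mk_insert (by simpa using (hgr t1).symm),
      Cardinal.mk_insert (by simpa using (hgr t2).symm),
      Cardinal.mk_singleton, Cardinal.mk_singleton]
  have himmSr : immSuc S r = Set.range g := by
    ext y
    simp only [immSuc, Set.mem_setOf_eq, Set.mem_range]
    constructor
    · rintro ⟨hy, hry, hl⟩
      rcases hcases y hy with rfl | ⟨t, rfl⟩
      · exact absurd hry (lt_irrefl _)
      · exact ⟨t, rfl⟩
    · rintro ⟨t, rfl⟩
      exact ⟨hgS t, hgt t, by rw [hleng t, hlenr]⟩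
  have hStrong : IsStrongSubtree T S := by
    refine ⟨hsub, hStree, hUR, hBal, ?_, ?_⟩
    · intro k hk
      have hk2 : k < 2 := (hH k).1 hk
      interval_cases k
      · exact ⟨n, by rw [hlevel0]; exact Set.singleton_subset_iff.2 ⟨hrT, hrlen⟩⟩
      · refine ⟨m + 1, ?_⟩
        rw [hlevel1]
        rintro y ⟨t, rfl⟩
        exact ⟨(hgmem t).1, (hgmem t).2.1⟩
    · intro s hs hne t ht
      rcases hcases s hs with rfl | ⟨t', rfl⟩
      · refine ⟨g ⟨t, ht⟩, ⟨by rw [himmSr]; exact ⟨_, rfl⟩, (hgmem ⟨t, ht⟩).2.2⟩, ?_⟩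
        rintro y ⟨hy, hty⟩
        rw [himmSr] at hy
        obtain ⟨t'', rfl⟩ := hy
        have h1 : t ∈ fullChain T (g t'') := ⟨ht.1, hty⟩
        have h2 : t''.1 ∈ fullChain T (g t'') := ⟨(hImm t'').1, (hgmem t'').2.2⟩
        have hlen12 : len T t = len T t''.1 := by
          have := ht.2.2; rw [hrlen] at this
          rw [this, (hImm t'').2.2]
        have : t = t''.1 := eq_of_len_eq htree ((hgmem t'').1) h1 h2 hlen12
        congr 1
        exact Subtype.ext this.symm
      · exfalso
        obtain ⟨y, hy⟩ := hne
        have := hy.2.2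
        rw [hleng t'] at this
        rcases hcases y hy.1 with rfl | ⟨t'', rfl⟩
        · rw [hlenr] at this; omega
        · rw [hleng t''] at this; omega
  refine ⟨hStrong, hH, hlevel0, ?_⟩
  rw [hlevel1]
  rintro y ⟨t, rfl⟩
  exact ⟨(hgmem t).1, (hgmem t).2.1⟩

lemma Ar_surj (hT : IsFinHomTree T b h) (hr : r ∈ level T n) (hn : n ≤ m)
    {S : Set α} (hS : S ∈ Ar T m r) :
    ∃ g ∈ Set.pi Set.univ (fun t : ↑(immSuc T r) => aboveAt T t.1 (m + 1)), Phi r g = S := by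
  obtain ⟨hstrong, hH, hroot, htop⟩ := hS
  obtain ⟨hrT, hrlen⟩ := hr
  have htree := hT.1
  have hStree : IsTree S := hstrong.2.1
  obtain ⟨hlev1, hSstruct⟩ := tree_height2_struct hStree hH hroot
  have hrS : r ∈ S := (root_mem hroot).1
  have hne1 : (level S 1).Nonempty := (hH 1).2 (by omega)
  have himm_ne : (immSuc S r).Nonempty := hlev1 ▸ hne1
  have hsucc := hstrong.2.2.2.2.2 r hrS himm_ne
  choose g hg1 hg2 using fun t : ↑(immSuc T r) => hsucc t.1 t.2
  have hgmem : ∀ t : ↑(immSuc T r), g t ∈ level S 1 := fun t => hlev1 ▸ (hg1 t).1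
  refine ⟨g, ?_, ?_⟩
  · intro t _
    exact ⟨htop (hgmem t), (hg1 t).2⟩
  · ext y
    constructor
    · rintro (rfl | ⟨t, rfl⟩)
      · exact hrS
      · exact (hgmem t).1
    · intro hy
      rw [hSstruct] at hy
      rcases hy with rfl | hy1
      · exact Set.mem_insert _ _
      have hyT1 : y ∈ level T (m + 1) := htop hy1
      have hyimm : y ∈ immSuc S r := hlev1 ▸ hy1
      have hry : r < y := hyimm.2.1
      obtain ⟨u, huT, huy, hulen⟩ := exists_len_eq htree hyT1.1 (n + 1)
        (by rw [hyT1.2]; omega)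
      have hrc : r ∈ fullChain T y := ⟨hrT, le_of_lt hry⟩
      have huc : u ∈ fullChain T y := ⟨huT, huy⟩
      have hru : r < u := by
        have hle : r ≤ u := le_of_len_le htree hyT1.1 hrc huc (by omega)
        exact lt_of_le_of_ne hle (fun heq => by rw [← heq, hrlen] at hulen; omega)
      have hu : u ∈ immSuc T r := ⟨huT, hru, by rw [hulen, hrlen]⟩
      have : y = g ⟨u, hu⟩ := hg2 ⟨u, hu⟩ y ⟨hyimm, huy⟩
      exact Set.mem_insert_of_mem _ ⟨⟨u, hu⟩, this.symm⟩

lemma Phi_injOn (hT : IsFinHomTree T b h) (hr : r ∈ level T n) (hn : n ≤ m) :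
    Set.InjOn (Phi r) (Set.pi Set.univ (fun t : ↑(immSuc T r) => aboveAt T t.1 (m + 1))) := by
  intro g hg g' hg' heq
  have htree := hT.1
  funext t
  have h1 : g t ∈ Phi r g' := heq ▸ Set.mem_insert_of_mem _ ⟨t, rfl⟩
  have hglen : len T (g t) = m + 1 := ((hg t (Set.mem_univ t)).1).2
  have hgr : g t ≠ r := by
    intro hr'
    rw [hr', hr.2] at hglen; omega
  rcases h1 with h1 | ⟨t', ht'⟩
  · exact absurd h1 hgr
  have hgT : g t ∈ T := ((hg t (Set.mem_univ t)).1).1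
  have htc : t.1 ∈ fullChain T (g t) := ⟨t.2.1, (hg t (Set.mem_univ t)).2⟩
  have ht'c : t'.1 ∈ fullChain T (g t) := ⟨t'.2.1, ht' ▸ (hg' t' (Set.mem_univ t')).2⟩
  have hlen : len T t.1 = len T t'.1 := by rw [t.2.2.2, t'.2.2.2]
  have : t.1 = t'.1 := eq_of_len_eq htree hgT htc ht'c hlen
  rw [← ht', show t' = t from Subtype.ext this.symm]

lemma Ar_card (hT : IsFinHomTree T b h) (hb : 2 ≤ b) (hm : m + 2 ≤ h)
    (hr : r ∈ level T n) (hn : n ≤ m) :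
    (Ar T m r).Finite ∧ (Ar T m r).ncard = b ^ ((m - n) * b) := by
  classical
  set I := ↑(immSuc T r)
  set C : I → Set α := fun t => aboveAt T t.1 (m + 1) with hC
  have hrT : r ∈ T := hr.1
  have hfinImm : (immSuc T r).Finite ∧ (immSuc T r).ncard = b :=
    immSuc_card hT (by omega) hrT (by rw [hr.2]; omega)
  haveI : Finite I := hfinImm.1.to_subtype
  haveI : Fintype I := Fintype.ofFinite I
  have hCt : ∀ t : I, (C t).Finite ∧ (C t).ncard = b ^ (m - n) := by
    intro t
    have htT : t.1 ∈ T := t.2.1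
    have htlen : len T t.1 = n + 1 := by rw [t.2.2.2, hr.2]
    have := aboveAt_card hT (by omega) htT htlen (m - n) (by omega)
    rwa [show n + 1 + (m - n) = m + 1 by omega] at this
  have hAr : Ar T m r = Phi r '' (Set.pi Set.univ C) := by
    apply Set.eq_of_subset_of_subset
    · intro S hS
      obtain ⟨g, hg, hgeq⟩ := Ar_surj hT hr hn hS
      exact ⟨g, hg, hgeq⟩
    · rintro - ⟨g, hg, rfl⟩
      exact mem_Ar hT hb hm hr hn g (fun t => hg t (Set.mem_univ t))
  have hpifin : (Set.pi Set.univ C).Finite := Set.Finite.pi (fun t => (hCt t).1)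
  have hpicard : (Set.pi Set.univ C).ncard = b ^ ((m - n) * b) := by
    rw [← Nat.card_coe_set_eq]
    rw [Nat.card_congr (Equiv.Set.univPi C), Nat.card_pi]
    have : ∀ t : I, Nat.card ↑(C t) = b ^ (m - n) := by
      intro t; rw [Nat.card_coe_set_eq, (hCt t).2]
    rw [Finset.prod_congr rfl (fun t _ => this t), Finset.prod_const, ← pow_mul]
    congr 1
    rw [Finset.card_univ, ← Nat.card_eq_fintype_card, Nat.card_coe_set_eq, hfinImm.2]
  rw [hAr]
  exact ⟨hpifin.image _, by
    rw [Set.ncard_image_of_injOn (Phi_injOn hT hr hn), hpicard]⟩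

lemma An_eq_biUnion (hT : IsFinHomTree T b h) :
    An T m n = ⋃ r ∈ level T n, Ar T m r := by
  ext S
  simp only [Set.mem_iUnion, exists_prop]
  constructor
  · rintro ⟨hstrong, hH, hlev0, hlev1⟩
    obtain ⟨r, hroot⟩ := hstrong.2.2.1
    have hrlev : r ∈ level T n := hlev0 (by rw [hroot]; rfl)
    exact ⟨r, hrlev, hstrong, hH, hroot, hlev1⟩
  · rintro ⟨r, hrlev, hstrong, hH, hroot, hlev1⟩
    exact ⟨hstrong, hH, by rw [hroot]; exact Set.singleton_subset_iff.2 hrlev, hlev1⟩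

lemma An_card (hT : IsFinHomTree T b h) (hb : 2 ≤ b) (hm : m + 2 ≤ h) (hn : n ≤ m) :
    (An T m n).Finite ∧ (An T m n).ncard = b ^ (n + (m - n) * b) := by
  have hlev := level_card hT (by omega) (show n < h by omega)
  have hArs : ∀ r ∈ level T n, (Ar T m r).Finite ∧ (Ar T m r).ncard = b ^ ((m - n) * b) :=
    fun r hr => Ar_card hT hb hm hr hn
  have hdisj : ∀ r ∈ level T n, ∀ r' ∈ level T n, r ≠ r' →
      Disjoint (Ar T m r) (Ar T m r') := by
    intro r _ r' _ hne
    rw [Set.disjoint_left]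
    rintro S ⟨-, -, hroot, -⟩ ⟨-, -, hroot', -⟩
    exact hne (Set.singleton_eq_singleton_iff.1 (hroot ▸ hroot'))
  obtain ⟨hF, hC⟩ := ncard_biUnion_const hlev.1 (Ar T m) (b ^ ((m - n) * b))
    (fun r hr => (hArs r hr).1) (fun r hr => (hArs r hr).2) hdisj
  rw [An_eq_biUnion hT]
  exact ⟨hF, by rw [hC, hlev.2, ← pow_add]⟩

lemma levelSetOf_height2 {S : Set α} (hS : IsStrongSubtree T S) (hH : HasHeight S 2)
    {r : α} {n m : ℕ} (hroot : level S 0 = {r}) (hrn : r ∈ level T n)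
    (htop : level S 1 ⊆ level T (m + 1)) (hnm : n ≤ m) :
    levelSetOf T S = {n, m + 1} := by
  ext k
  simp only [levelSetOf, Set.mem_setOf_eq, Set.mem_insert_iff, Set.mem_singleton_iff]
  constructor
  · rintro ⟨j, hne, hsub⟩
    have hj : j < 2 := (hH j).1 hne
    interval_cases j
    · have : r ∈ level T k := hsub (by rw [hroot]; rfl)
      exact Or.inl (level_eq_of_mem this hrn)
    · obtain ⟨y, hy⟩ := hne
      exact Or.inr (level_eq_of_mem (hsub hy) (htop hy))
  · rintro (rfl | rfl)
    · exact ⟨0, by rw [hroot]; exact ⟨Set.singleton_nonempty r,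
        Set.singleton_subset_iff.2 hrn⟩⟩
    · exact ⟨1, (hH 1).2 (by omega), htop⟩

lemma rootlevel_le {b h m : ℕ} (hT : IsFinHomTree T b h) {S : Set α} {r : α}
    (hS : IsStrongSubtree T S) (hH : HasHeight S 2) (hroot : level S 0 = {r})
    (htop : level S 1 ⊆ level T (m + 1)) : len T r ≤ m := by
  obtain ⟨hlev1, -⟩ := tree_height2_struct hS.2.1 hH hroot
  obtain ⟨y, hy⟩ := (hH 1).2 (by omega)
  have hyimm : y ∈ immSuc S r := hlev1 ▸ hy
  have hlt := len_lt_len hT.1 (hS.1 (root_mem hroot).1) (hS.1 hyimm.1) hyimm.2.1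
  have hyT := htop hy
  rw [hyT.2] at hlt
  omega

lemma ncard_univ_pi {ι : Type*} [Fintype ι] {Y : ι → Type*} (A : ∀ i, Set (Y i)) :
    (Set.pi Set.univ A).ncard = ∏ i, (A i).ncard := by
  rw [← Nat.card_coe_set_eq, Nat.card_congr (Equiv.Set.univPi A), Nat.card_pi]
  exact Finset.prod_congr rfl (fun i _ => Nat.card_coe_set_eq _)

lemma geom_id (P c : ℕ) :
    ∀ m, (P + c) ^ (m + 1) =
      c * (∑ n ∈ Finset.range (m + 1), P ^ n * (P + c) ^ (m - n)) + P ^ (m + 1) := by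
  intro m
  induction m with
  | zero => simp; ring
  | succ m ih =>
    have hsplit : (∑ n ∈ Finset.range (m + 2), P ^ n * (P + c) ^ (m + 1 - n))
        = (P + c) * (∑ n ∈ Finset.range (m + 1), P ^ n * (P + c) ^ (m - n)) + P ^ (m + 1) := by
      rw [Finset.sum_range_succ, Finset.mul_sum]
      congr 1
      · apply Finset.sum_congr rfl
        intro n hn
        have hn' : n < m + 1 := Finset.mem_range.1 hn
        rw [show m + 1 - n = (m - n) + 1 by omega, pow_succ]
        ring
      · simp
    rw [hsplit, show (P + c) ^ (m + 1 + 1) = (P + c) * (P + c) ^ (m + 1) by ring, ih]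
    ring

lemma geom_div {P Q : ℕ} (hPQ : P < Q) (m : ℕ) :
    (∑ n ∈ Finset.range (m + 1), P ^ n * Q ^ (m - n)) = (Q ^ (m + 1) - P ^ (m + 1)) / (Q - P) := by
  obtain ⟨c, hc, hcpos⟩ : ∃ c, Q = P + c ∧ 0 < c := ⟨Q - P, by omega, by omega⟩
  subst hc
  have hid := geom_id P c m
  have h1 : (P + c) ^ (m + 1) - P ^ (m + 1) =
      c * (∑ n ∈ Finset.range (m + 1), P ^ n * (P + c) ^ (m - n)) := by omega
  rw [h1, show P + c - P = c by omega, Nat.mul_div_cancel_left _ hcpos]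

end ArCard

end Aux
open DHL in
/-- **Counting fact.** If `T` is a finite vector homogeneous tree with `b_T = (b_1, …, b_d)`
and of height at least `m + 2`, then the number of vector strong subtrees `F` of `T` of
height `2` with `⊗F(1) ⊆ ⊗T(m+1)` is exactly
`((∏ b_i^{b_i})^{m+1} − (∏ b_i)^{m+1}) / (∏ b_i^{b_i} − ∏ b_i)` (the division is exact). -/
theorem statement5 {d : ℕ} (hd : 1 ≤ d) (b : Fin d → ℕ) (hb : ∀ i, 2 ≤ b i) (m : ℕ)
    (X : Fin d → Type*) [∀ i, PartialOrder (X i)] (T : ∀ i, Set (X i)) (h : ℕ)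
    (hT : ∀ i, IsFinHomTree (T i) (b i) h) (hh : m + 2 ≤ h) :
    {F : ∀ i, Set (X i) | IsVStrongSubtree T F ∧ (∀ i, HasHeight (F i) 2) ∧
        ∀ i, level (F i) 1 ⊆ level (T i) (m + 1)}.ncard =
      ((∏ i, (b i) ^ (b i)) ^ (m + 1) - (∏ i, b i) ^ (m + 1)) /
        ((∏ i, (b i) ^ (b i)) - ∏ i, b i) := by
  classical
  haveI : Nonempty (Fin d) := ⟨⟨0, hd⟩⟩
  set P : ℕ := ∏ i, b i with hPdef
  set Q : ℕ := ∏ i, (b i) ^ (b i) with hQdef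
  set Pn : ℕ → Set (∀ i, Set (X i)) :=
    fun n => Set.pi Set.univ (fun i => An (T i) m n) with hPndef
  set i0 : Fin d := ⟨0, hd⟩ with hi0
  -- the main decomposition
  have hmain : {F : ∀ i, Set (X i) | IsVStrongSubtree T F ∧ (∀ i, HasHeight (F i) 2) ∧
      ∀ i, level (F i) 1 ⊆ level (T i) (m + 1)} =
      ⋃ n ∈ ((Finset.range (m + 1) : Finset ℕ) : Set ℕ), Pn n := by
    ext F
    simp only [Set.mem_setOf_eq, Set.mem_iUnion, exists_prop, Finset.coe_sort_coe,
      Finset.mem_coe, Finset.mem_range]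
    constructor
    · rintro ⟨hVS, hHt, htop⟩
      have hstrong : ∀ i, IsStrongSubtree (T i) (F i) := hVS.1
      choose r hroot using fun i => (hstrong i).2.2.1
      have hrF : ∀ i, r i ∈ F i := fun i => (root_mem (hroot i)).1
      have hrT : ∀ i, r i ∈ T i := fun i => (hstrong i).1 (hrF i)
      have hrlev : ∀ i, r i ∈ level (T i) (len (T i) (r i)) := fun i => mem_level_self (hrT i)
      have hle : ∀ i, len (T i) (r i) ≤ m :=
        fun i => rootlevel_le (hT i) (hstrong i) (hHt i) (hroot i) (htop i)
      have hlso : ∀ i, levelSetOf (T i) (F i) = {len (T i) (r i), m + 1} := fun i =>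
        levelSetOf_height2 (hstrong i) (hHt i) (hroot i) (hrlev i) (htop i) (hle i)
      refine ⟨len (T i0) (r i0), by have := hle i0; omega, ?_⟩
      have heqn : ∀ i, len (T i) (r i) = len (T i0) (r i0) := by
        intro i
        have h2 := (hVS.2 i i0)
        rw [hlso i, hlso i0] at h2
        have : len (T i) (r i) ∈ ({len (T i0) (r i0), m + 1} : Set ℕ) :=
          h2 ▸ (Set.mem_insert _ _)
        rcases this with h | h
        · exact h
        · exact absurd h (by have := hle i; simp; omega)
      intro i _
      refine ⟨hstrong i, hHt i, ?_, htop i⟩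
      rw [hroot i]
      exact Set.singleton_subset_iff.2 (by rw [← heqn i]; exact hrlev i)
    · rintro ⟨n, hn, hF⟩
      have hAn : ∀ i, F i ∈ An (T i) m n := fun i => hF i (Set.mem_univ i)
      have hstrong : ∀ i, IsStrongSubtree (T i) (F i) := fun i => (hAn i).1
      refine ⟨⟨hstrong, ?_⟩, fun i => (hAn i).2.1, fun i => (hAn i).2.2.2⟩
      choose r hroot using fun i => (hstrong i).2.2.1
      have hlso : ∀ i, levelSetOf (T i) (F i) = {n, m + 1} := by
        intro i
        refine levelSetOf_height2 (hstrong i) ((hAn i).2.1) (hroot i)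
          ((hAn i).2.2.1 (by rw [hroot i]; rfl)) ((hAn i).2.2.2) (by omega)
      intro i j
      rw [hlso i, hlso j]
  -- cardinalities of the pieces
  have hcard : ∀ n ≤ m, (Pn n).Finite ∧ (Pn n).ncard = P ^ n * Q ^ (m - n) := by
    intro n hn
    have hAi : ∀ i, (An (T i) m n).Finite ∧
        (An (T i) m n).ncard = (b i) ^ (n + (m - n) * b i) :=
      fun i => An_card (hT i) (hb i) hh hn
    refine ⟨Set.Finite.pi fun i => (hAi i).1, ?_⟩
    rw [hPndef]
    rw [ncard_univ_pi, Finset.prod_congr rfl (fun i _ => (hAi i).2)]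
    have hsplit : ∀ i : Fin d, (b i) ^ (n + (m - n) * b i) =
        (b i) ^ n * ((b i) ^ (b i)) ^ (m - n) := by
      intro i
      rw [pow_add, ← pow_mul, Nat.mul_comm (b i) (m - n)]
    rw [Finset.prod_congr rfl (fun i _ => hsplit i), Finset.prod_mul_distrib,
      Finset.prod_pow, Finset.prod_pow]
  -- disjointness
  have hdisj : ∀ n ∈ Finset.range (m + 1), ∀ n' ∈ Finset.range (m + 1), n ≠ n' →
      Disjoint (Pn n) (Pn n') := by
    intro n _ n' _ hne
    rw [Set.disjoint_left]
    intro F hFn hFn'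
    have h1 : F i0 ∈ An (T i0) m n := hFn i0 (Set.mem_univ i0)
    have h2 : F i0 ∈ An (T i0) m n' := hFn' i0 (Set.mem_univ i0)
    obtain ⟨y, hy⟩ := (h1.2.1 0).2 (by omega)
    exact hne (level_eq_of_mem (h1.2.2.1 hy) (h2.2.2.1 hy))
  -- put everything together
  obtain ⟨hFin, hCnt⟩ := ncard_biUnion_sum Pn
    (fun n hn => (hcard n (by have := Finset.mem_range.1 hn; omega)).1) hdisj
  rw [hmain, hCnt]
  have hsum : ∑ n ∈ Finset.range (m + 1), (Pn n).ncard =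
      ∑ n ∈ Finset.range (m + 1), P ^ n * Q ^ (m - n) := by
    apply Finset.sum_congr rfl
    intro n hn
    exact (hcard n (by have := Finset.mem_range.1 hn; omega)).2
  rw [hsum]
  have hPQ : P < Q := by
    rw [hPdef, hQdef]
    apply Finset.prod_lt_prod_of_nonempty
    · intro i _
      have := hb i; omega
    · intro i _
      calc b i = (b i) ^ 1 := (pow_one _).symm
        _ < (b i) ^ (b i) := Nat.pow_lt_pow_right (hb i) (hb i)
    · exact Finset.univ_nonempty
  exact geom_div hPQ m
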